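/- Let K be a field, G a finite group, and L/K a finite Galois field extension with Galois group G acting on L. Then the map j : L ⊗_K K[G] → End_K(L) defined by j(a ⊗ g)(x) = a · g(x) is bijective; that is, L is a Hopf-Galois extension of K with Hopf algebra the group algebra K[G]. -/

import Mathlib

open TensorProduct

/-- Let `L/K` be a finite Galois extension of fields with Galois group
`G = Gal(L/K)`.  Then the map `j : L ⊗_K K[G] → End_K(L)`, `j(a ⊗ g)(x) = a · g(x)`, is
bijective; that is, `L/K` is a Hopf-Galois extension with Hopf algebra the group algebra
`K[G]`. -/
theorem galois_extension_is_hopf_galois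
    (K L : Type*) [Field K] [Field L] [Algebra K L]
    [FiniteDimensional K L] [IsGalois K L]
    (j : L ⊗[K] MonoidAlgebra K (L ≃ₐ[K] L) →ₗ[K] (L →ₗ[K] L))
    (hj : ∀ (a : L) (σ : L ≃ₐ[K] L) (x : L),
      j (a ⊗ₜ MonoidAlgebra.single σ (1 : K)) x = a * σ x) :
    Function.Bijective j := by
  classical
  -- linear independence of automorphisms over L
  have li : LinearIndependent L (fun σ : L ≃ₐ[K] L => (⇑σ : L → L)) := by
    have h1 := linearIndependent_monoidHom L L
    have h2 := h1.comp (fun σ : L ≃ₐ[K] L => ((σ : L →ₐ[K] L) : L →* L))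
      (fun σ τ h => by
        apply AlgEquiv.ext
        intro x
        exact congrFun (congrArg (fun (f : L →* L) => ⇑f) h) x)
    exact h2
  -- injectivity
  have hinj : Function.Injective j := by
    rw [← LinearMap.ker_eq_bot]
    apply (Submodule.eq_bot_iff _).2
    intro t ht
    rw [LinearMap.mem_ker] at ht
    set e := (TensorProduct.congr (LinearEquiv.refl K L) (MonoidAlgebra.coeffLinearEquiv K)).trans
      (TensorProduct.finsuppScalarRight K K L (L ≃ₐ[K] L)) with he
    set f : (L ≃ₐ[K] L) →₀ L := e t with hf
    have ht' : t = (∑ σ ∈ f.support, f σ ⊗ₜ[K] MonoidAlgebra.single σ (1 : K)) := by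
      have h0 : t = e.symm.toLinearMap f := by
        show t = e.symm f
        rw [hf]; simp
      rw [h0]
      conv_lhs => rw [← Finsupp.sum_single f, Finsupp.sum]
      rw [map_sum]
      refine Finset.sum_congr rfl fun σ _ => ?_
      simp [he]
    have hsum : (∑ σ ∈ f.support, f σ • (⇑σ : L → L)) = 0 := by
      funext x
      have hx : j t x = 0 := by rw [ht]; rfl
      rw [ht', map_sum] at hx
      rw [LinearMap.coe_sum, Finset.sum_apply] at hx
      have : ∑ σ ∈ f.support, f σ * σ x = 0 := by
        rw [← hx]
        exact Finset.sum_congr rfl fun σ _ => (hj (f σ) σ x).symm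
      simpa using this
    have hz : ∀ σ ∈ f.support, f σ = 0 :=
      linearIndependent_iff'.mp li f.support f hsum
    have hf0 : f = 0 := by
      ext σ
      by_cases h : σ ∈ f.support
      · exact hz σ h
      · simpa using Finsupp.notMem_support_iff.mp h
    rw [ht', hf0]
    simp
  refine ⟨hinj, ?_⟩
  haveI : Fintype (L ≃ₐ[K] L) := AlgEquiv.fintype K L
  haveI : Module.Finite K (MonoidAlgebra K (L ≃ₐ[K] L)) :=
    Module.Finite.equiv (MonoidAlgebra.coeffLinearEquiv K).symm
  have hdim : Module.finrank K (L ⊗[K] MonoidAlgebra K (L ≃ₐ[K] L))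
      = Module.finrank K (L →ₗ[K] L) := by
    rw [Module.finrank_tensorProduct, Module.finrank_linearMap]
    congr 1
    rw [show Module.finrank K (MonoidAlgebra K (L ≃ₐ[K] L))
        = Module.finrank K ((L ≃ₐ[K] L) →₀ K) from (MonoidAlgebra.coeffLinearEquiv K).finrank_eq,
      Module.finrank_finsupp_self]
    have hc := IsGalois.card_aut_eq_finrank K L
    rw [← hc]
    congr 1
    exact (Nat.card_eq_fintype_card).symm
  exact (LinearMap.injective_iff_surjective_of_finrank_eq_finrank hdim).mp hinj
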